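/- Let P be a Köthe set on a set I with P ≺ P², and let A = λ(P) with pointwise multiplication. Then A² = { a² : a ∈ A } = { a ∈ A : (√|a_i|)_{i∈I} ∈ A }, where A² is the linear span of {ab : a, b ∈ A}. -/

import Mathlib

/-- For a Köthe algebra `A = λ(P)` (with `P ≺ P²`),
`A² = {a² : a ∈ A} = {a ∈ A : √|a| ∈ A}`, where `A²` is the linear span of products. -/
theorem kothe_square_description {I : Type*} (P : Set (I → ℝ))
    (hP0 : ∀ p ∈ P, ∀ i, 0 ≤ p i)
    (hP1 : ∀ i, ∃ p ∈ P, 0 < p i)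
    (hP2 : ∀ p ∈ P, ∀ q ∈ P, ∃ r ∈ P, ∀ i, max (p i) (q i) ≤ r i)
    (hPP2 : ∀ p ∈ P, ∃ q ∈ P, ∃ C : ℝ, 0 < C ∧ ∀ i, p i ≤ C * (q i) ^ 2)
    (Λ : Set (I → ℂ))
    (hΛ : Λ = {x | ∀ p ∈ P, Summable fun i => ‖x i‖ * p i}) :
    (Submodule.span ℂ {x : I → ℂ | ∃ b ∈ Λ, ∃ c ∈ Λ, x = fun i => b i * c i} : Set (I → ℂ))
      = {x : I → ℂ | ∃ a ∈ Λ, x = fun i => a i * a i} ∧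
    (Submodule.span ℂ {x : I → ℂ | ∃ b ∈ Λ, ∃ c ∈ Λ, x = fun i => b i * c i} : Set (I → ℂ))
      = {a ∈ Λ | (fun i => (Real.sqrt (‖a i‖) : ℂ)) ∈ Λ} := by
  subst hΛ
  set Λ : Set (I → ℂ) := {x | ∀ p ∈ P, Summable fun i => ‖x i‖ * p i} with hΛdef
  -- membership criterion for real-valued nonneg coerced functions
  have key : ∀ (f : I → ℝ), (∀ i, 0 ≤ f i) →
      ((fun i => ((f i : ℝ) : ℂ)) ∈ Λ ↔ ∀ p ∈ P, Summable fun i => f i * p i) := by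
    intro f hf
    have hfe : ∀ p : I → ℝ, (fun i => ‖((f i : ℝ) : ℂ)‖ * p i) = fun i => f i * p i := by
      intro p
      funext i
      rw [Complex.norm_real, Real.norm_of_nonneg (hf i)]
    constructor
    · intro h p hp
      have := h p hp
      rwa [hfe p] at this
    · intro h p hp
      rw [hfe p]
      exact h p hp
  -- Λ is closed under pointwise multiplication
  have hmul : ∀ b ∈ Λ, ∀ c ∈ Λ, (fun i => b i * c i) ∈ Λ := by
    intro b hb c hc p hp
    obtain ⟨q, hq, C, hC, hCq⟩ := hPP2 p hp
    have hbs := hb q hq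
    have hcs := hc q hq
    have hnn : ∀ j, 0 ≤ ‖c j‖ * q j :=
      fun j => mul_nonneg (norm_nonneg _) (hP0 q hq j)
    set M : ℝ := ∑' j, ‖c j‖ * q j with hM
    have hMle : ∀ i, ‖c i‖ * q i ≤ M :=
      fun i => hcs.le_tsum i fun j _ => hnn j
    apply Summable.of_nonneg_of_le
      (f := fun i => (C * M) * (‖b i‖ * q i))
      (fun i => mul_nonneg (norm_nonneg _) (hP0 p hp i))
    · intro i
      have h1 : ‖b i * c i‖ = ‖b i‖ * ‖c i‖ := norm_mul _ _
      rw [h1]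
      have hb0 : (0:ℝ) ≤ ‖b i‖ := norm_nonneg _
      have hc0 : (0:ℝ) ≤ ‖c i‖ := norm_nonneg _
      have hq0 : (0:ℝ) ≤ q i := hP0 q hq i
      have hp0 : (0:ℝ) ≤ p i := hP0 p hp i
      have hpq := hCq i
      have hMi := hMle i
      calc ‖b i‖ * ‖c i‖ * p i
          ≤ ‖b i‖ * ‖c i‖ * (C * q i ^ 2) :=
            mul_le_mul_of_nonneg_left hpq (mul_nonneg hb0 hc0)
        _ = C * (‖b i‖ * q i) * (‖c i‖ * q i) := by ring
        _ ≤ C * (‖b i‖ * q i) * M :=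
            mul_le_mul_of_nonneg_left hMi
              (mul_nonneg hC.le (mul_nonneg hb0 hq0))
        _ = C * M * (‖b i‖ * q i) := by ring
    · exact hbs.mul_left _
  -- √ of a product of Λ elements is in Λ
  have hsqrtmul : ∀ b ∈ Λ, ∀ c ∈ Λ, ∀ p ∈ P,
      Summable fun i => Real.sqrt (‖b i * c i‖) * p i := by
    intro b hb c hc p hp
    apply Summable.of_nonneg_of_le
      (f := fun i => ‖b i‖ * p i + ‖c i‖ * p i)
      (fun i => mul_nonneg (Real.sqrt_nonneg _) (hP0 p hp i))
    · intro i
      have hb0 : (0:ℝ) ≤ ‖b i‖ := norm_nonneg _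
      have hc0 : (0:ℝ) ≤ ‖c i‖ := norm_nonneg _
      have hp0 : (0:ℝ) ≤ p i := hP0 p hp i
      have h1 : ‖b i * c i‖ = ‖b i‖ * ‖c i‖ := norm_mul _ _
      have h2 : Real.sqrt (‖b i‖ * ‖c i‖)
          ≤ ‖b i‖ + ‖c i‖ := by
        have h3 : ‖b i‖ * ‖c i‖
            ≤ (‖b i‖ + ‖c i‖) ^ 2 := by nlinarith
        calc Real.sqrt (‖b i‖ * ‖c i‖)
            ≤ Real.sqrt ((‖b i‖ + ‖c i‖) ^ 2) := Real.sqrt_le_sqrt h3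
          _ = ‖b i‖ + ‖c i‖ := Real.sqrt_sq (by positivity)
      rw [h1]
      calc Real.sqrt (‖b i‖ * ‖c i‖) * p i
          ≤ (‖b i‖ + ‖c i‖) * p i := mul_le_mul_of_nonneg_right h2 hp0
        _ = ‖b i‖ * p i + ‖c i‖ * p i := by ring
    · exact (hb p hp).add (hc p hp)
  -- the right-hand side set as a submodule
  set T3 : Set (I → ℂ) := {a ∈ Λ | (fun i => (Real.sqrt (‖a i‖) : ℂ)) ∈ Λ}
    with hT3def
  have hT3mem : ∀ a, a ∈ T3 ↔ a ∈ Λ ∧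
      (∀ p ∈ P, Summable fun i => Real.sqrt (‖a i‖) * p i) := by
    intro a
    constructor
    · rintro ⟨h1, h2⟩
      exact ⟨h1, (key _ (fun i => Real.sqrt_nonneg _)).mp h2⟩
    · rintro ⟨h1, h2⟩
      exact ⟨h1, (key _ (fun i => Real.sqrt_nonneg _)).mpr h2⟩
  have hT3sub : ∃ M : Submodule ℂ (I → ℂ), (M : Set (I → ℂ)) = T3 := by
    refine ⟨{ carrier := T3, add_mem' := ?_, zero_mem' := ?_, smul_mem' := ?_ }, rfl⟩
    · rintro a b ha hb
      rw [hT3mem] at ha hb ⊢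
      constructor
      · intro p hp
        apply Summable.of_nonneg_of_le
          (f := fun i => ‖a i‖ * p i + ‖b i‖ * p i)
          (fun i => mul_nonneg (norm_nonneg _) (hP0 p hp i))
        · intro i
          have h1 : ‖(a + b) i‖ ≤ ‖a i‖ + ‖b i‖ := by
            simpa using norm_add_le (a i) (b i)
          have hp0 := hP0 p hp i
          nlinarith [norm_nonneg ((a+b) i)]
        · exact (ha.1 p hp).add (hb.1 p hp)
      · intro p hp
        apply Summable.of_nonneg_of_le
          (f := fun i => Real.sqrt (‖a i‖) * p i
            + Real.sqrt (‖b i‖) * p i)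
          (fun i => mul_nonneg (Real.sqrt_nonneg _) (hP0 p hp i))
        · intro i
          have hp0 := hP0 p hp i
          have h1 : ‖(a + b) i‖ ≤ ‖a i‖ + ‖b i‖ := by
            simpa using norm_add_le (a i) (b i)
          have h2 : Real.sqrt (‖(a + b) i‖)
              ≤ Real.sqrt (‖a i‖) + Real.sqrt (‖b i‖) := by
            have h3 : ‖(a + b) i‖
                ≤ (Real.sqrt (‖a i‖) + Real.sqrt (‖b i‖)) ^ 2 := by
              have sa := Real.sq_sqrt (norm_nonneg (a i))
              have sb := Real.sq_sqrt (norm_nonneg (b i))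
              nlinarith [Real.sqrt_nonneg (‖a i‖),
                Real.sqrt_nonneg (‖b i‖)]
            calc Real.sqrt (‖(a + b) i‖)
                ≤ Real.sqrt ((Real.sqrt (‖a i‖)
                    + Real.sqrt (‖b i‖)) ^ 2) := Real.sqrt_le_sqrt h3
              _ = _ := Real.sqrt_sq (by positivity)
          nlinarith [Real.sqrt_nonneg (‖(a+b) i‖)]
        · exact (ha.2 p hp).add (hb.2 p hp)
    · rw [hT3mem]
      constructor
      · intro p hp
        simpa using summable_zero
      · intro p hp
        simpa using summable_zero
    · rintro r a ha
      rw [hT3mem] at ha ⊢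
      constructor
      · intro p hp
        have h1 : (fun i => ‖(r • a) i‖ * p i)
            = fun i => ‖r‖ * (‖a i‖ * p i) := by
          funext i
          simp [mul_assoc]
        rw [h1]
        exact (ha.1 p hp).mul_left _
      · intro p hp
        have h1 : (fun i => Real.sqrt (‖(r • a) i‖) * p i)
            = fun i => Real.sqrt (‖r‖)
              * (Real.sqrt (‖a i‖) * p i) := by
          funext i
          rw [Pi.smul_apply, smul_eq_mul, norm_mul,
            Real.sqrt_mul (norm_nonneg r), mul_assoc]
        rw [h1]
        exact (ha.2 p hp).mul_left _
  obtain ⟨M, hMcoe⟩ := hT3sub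
  set S : Set (I → ℂ) := {x : I → ℂ | ∃ b ∈ Λ, ∃ c ∈ Λ, x = fun i => b i * c i} with hSdef
  -- span S ⊆ T3
  have hspanT3 : (Submodule.span ℂ S : Set (I → ℂ)) ⊆ T3 := by
    rw [← hMcoe]
    intro x hx
    refine Submodule.span_le.mpr ?_ hx
    rintro y ⟨b, hb, c, hc, rfl⟩
    rw [hMcoe, hT3mem]
    exact ⟨hmul b hb c hc, hsqrtmul b hb c hc⟩
  -- T3 ⊆ squares
  have hT3sq : T3 ⊆ {x : I → ℂ | ∃ a ∈ Λ, x = fun i => a i * a i} := by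
    intro x hx
    rw [hT3mem] at hx
    refine ⟨fun i => x i ^ (((2 : ℕ) : ℂ))⁻¹, ?_, ?_⟩
    · intro p hp
      have h1 : (fun i => ‖x i ^ (((2 : ℕ) : ℂ))⁻¹‖ * p i)
          = fun i => Real.sqrt (‖x i‖) * p i := by
        funext i
        rw [Complex.norm_cpow_inv_nat, Real.sqrt_eq_rpow]
        norm_num
      rw [h1]
      exact hx.2 p hp
    · funext i
      conv_lhs => rw [← Complex.cpow_nat_inv_pow (x i) (two_ne_zero)]
      rw [pow_two]
  -- squares ⊆ span S
  have hsqspan : {x : I → ℂ | ∃ a ∈ Λ, x = fun i => a i * a i}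
      ⊆ (Submodule.span ℂ S : Set (I → ℂ)) := by
    rintro x ⟨a, ha, rfl⟩
    exact Submodule.subset_span ⟨a, ha, a, ha, rfl⟩
  exact ⟨Set.Subset.antisymm (hspanT3.trans hT3sq) hsqspan,
    Set.Subset.antisymm hspanT3 (hT3sq.trans hsqspan)⟩
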